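/- Progress lemma, first form: under the interpolation setup, for 0 < λ ≤ 1, [Γ(v°,ρ_λ) − Γ(v°,ρ₀)] + Γ(v̂_λ, ρ₀) = λ^{-1}⟨v_λ − v₀, ρ_λ − ρ₀⟩ − ⟨v̂_λ − v̂₀, ρ_λ − ρ₀⟩. -/
import Mathlib


lemma gam_aux {B : Type*} [NormedAddCommGroup B] [NormedSpace ℝ B]
    (F : B → EReal) (E : (B →L[ℝ] ℝ) → ℝ) (v : B →L[ℝ] ℝ) (ρ : B)
    (hbot : F ρ ≠ ⊥)
    (h : F ρ + (v ρ : EReal) - (E v : EReal) = 0) :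
    ∃ a : ℝ, F ρ = (a : EReal) ∧ a + v ρ - E v = 0 := by
  have htop : F ρ ≠ ⊤ := by
    intro ht
    rw [ht] at h
    simp [EReal.top_add_coe, EReal.top_sub_coe] at h
  lift F ρ to ℝ using ⟨htop, hbot⟩ with a ha
  refine ⟨a, rfl, ?_⟩
  rw [← EReal.coe_add, ← EReal.coe_sub] at h
  exact_mod_cast h

/-- Excess energy `Γ(v,ρ) := F(ρ) + ⟨v,ρ⟩ − E(v)`. -/
noncomputable def Gam {B : Type*} [NormedAddCommGroup B] [NormedSpace ℝ B]
    (F : B → EReal) (E : (B →L[ℝ] ℝ) → ℝ) (v : B →L[ℝ] ℝ) (ρ : B) : EReal :=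
  F ρ + (v ρ : EReal) - (E v : EReal)

set_option maxHeartbeats 1000000 in
/-- Progress lemma, first form:
`[Γ(v°,ρ_λ) − Γ(v°,ρ₀)] + Γ(v̂_λ, ρ₀)
  = λ⁻¹⟨v_λ − v₀, ρ_λ − ρ₀⟩ − ⟨v̂_λ − v̂₀, ρ_λ − ρ₀⟩`. -/
theorem progress_lemma_first_form
    {B : Type*} [NormedAddCommGroup B] [NormedSpace ℝ B]
    (F₀ : B → EReal) (hFbot : ∀ σ : B, F₀ σ ≠ ⊥)
    (E₀ : (B →L[ℝ] ℝ) → ℝ)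
    (hE₀ : ∀ v : B →L[ℝ] ℝ, (⨅ σ : B, F₀ σ + (v σ : EReal)) = (E₀ v : EReal))
    (Φ : B → ℝ) (DΦ : B → (B →L[ℝ] ℝ))
    (hΦ : ∀ ρ σ : B, HasDerivAt (fun t : ℝ => Φ (ρ + t • σ)) (DΦ ρ σ) 0)
    (E : (B →L[ℝ] ℝ) → ℝ)
    (hE : ∀ v : B →L[ℝ] ℝ,
      (⨅ σ : B, (F₀ σ + (Φ σ : EReal)) + (v σ : EReal)) = (E v : EReal))
    -- interpolation setup
    (vt v₀ : B →L[ℝ] ℝ) (ρ₀ : B)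
    (hGP₀ : Gam F₀ E₀ v₀ ρ₀ = 0)
    (vhat₀ : B →L[ℝ] ℝ) (hvhat₀ : vhat₀ = v₀ + DΦ ρ₀)
    (Δv₀ : B →L[ℝ] ℝ) (hΔv₀ : Δv₀ = vt - vhat₀)
    (v₁ : B →L[ℝ] ℝ) (hv₁ : v₁ = v₀ + Δv₀)
    (lam : ℝ) (hlam : 0 < lam) (hlam1 : lam ≤ 1)
    (vlam : B →L[ℝ] ℝ) (hvlam : vlam = (1 - lam) • v₀ + lam • v₁)
    (ρlam : B) (hGP₀lam : Gam F₀ E₀ vlam ρlam = 0)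
    (vhatlam : B →L[ℝ] ℝ) (hvhatlam : vhatlam = vlam + DΦ ρlam)
    (hGPhat₀ : Gam (fun σ => F₀ σ + (Φ σ : EReal)) E vhat₀ ρ₀ = 0)
    (hGPhatlam : Gam (fun σ => F₀ σ + (Φ σ : EReal)) E vhatlam ρlam = 0) :
    (Gam (fun σ => F₀ σ + (Φ σ : EReal)) E vt ρlam
        - Gam (fun σ => F₀ σ + (Φ σ : EReal)) E vt ρ₀)
      + Gam (fun σ => F₀ σ + (Φ σ : EReal)) E vhatlam ρ₀
      = ((lam⁻¹ * ((vlam - v₀) (ρlam - ρ₀))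
          - (vhatlam - vhat₀) (ρlam - ρ₀) : ℝ) : EReal) := by
  have hb₀ : (fun σ => F₀ σ + (Φ σ : EReal)) ρ₀ ≠ ⊥ := by
    simp only [ne_eq, EReal.add_eq_bot_iff, EReal.coe_ne_bot, or_false]
    exact hFbot ρ₀
  have hblam : (fun σ => F₀ σ + (Φ σ : EReal)) ρlam ≠ ⊥ := by
    simp only [ne_eq, EReal.add_eq_bot_iff, EReal.coe_ne_bot, or_false]
    exact hFbot ρlam
  unfold Gam at hGPhat₀ hGPhatlam
  obtain ⟨a, ha, ha0⟩ := gam_aux (fun σ => F₀ σ + (Φ σ : EReal)) E vhat₀ ρ₀ hb₀ hGPhat₀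
  obtain ⟨b, hb, hb0⟩ := gam_aux (fun σ => F₀ σ + (Φ σ : EReal)) E vhatlam ρlam hblam hGPhatlam
  have hv : ∀ x : B, vlam x = v₀ x + lam * (vt x - vhat₀ x) := by
    intro x
    rw [hvlam, hv₁, hΔv₀]
    simp [ContinuousLinearMap.add_apply, ContinuousLinearMap.smul_apply,
      ContinuousLinearMap.sub_apply, smul_eq_mul]
    ring
  unfold Gam
  simp only [ha, hb]
  rw [← EReal.coe_add, ← EReal.coe_sub, ← EReal.coe_add, ← EReal.coe_sub,
    ← EReal.coe_add, ← EReal.coe_sub, ← EReal.coe_sub, ← EReal.coe_add]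
  norm_cast
  simp only [ContinuousLinearMap.sub_apply, map_sub]
  have h1 := hv ρlam
  have h2 := hv ρ₀
  field_simp
  nlinarith [hb0, h1, h2]
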